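/- arXiv:2008.08990 — 4 statements merged into one kernel-verified Lean document; each statement's English description precedes it below -/
import Mathlib

section
/- Let X be a nonnegative random variable with survival function F̄(x) = P(X > x) such that ∫₀^∞ F̄(x)² dx < ∞. Then for every integer m ≥ 1, ∏_{i=1}^m ∫₀^∞ F̄(x)^{2i} dx ≤ (∫₀^∞ F̄(x)² dx)^m; equivalently, -(1/2)∏_{i=1}^m ∫₀^∞ F̄(x)^{2i} dx ≥ -(1/2)(∫₀^∞ F̄(x)² dx)^m, i.e. the CREX of an m-sample MinRSSU design is at least the CREX of an m-sample SRS design. -/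
open MeasureTheory Finset

/-- For a nonnegative random variable `X` with survival function `F̄` such that
`∫₀^∞ F̄(x)² dx < ∞`, for every `m ≥ 1` one has
`∏_{i=1}^m ∫₀^∞ F̄(x)^(2i) dx ≤ (∫₀^∞ F̄(x)² dx)^m`, equivalently the CREX of the
`m`-sample MinRSSU design is at least the CREX of the `m`-sample SRS design. -/
theorem crex_minrssu_le_srs
    {Ω : Type*} [MeasurableSpace Ω] (μ : Measure Ω) [IsProbabilityMeasure μ]
    (X : Ω → ℝ) (hX : Measurable X) (hXpos : ∀ ω, 0 ≤ X ω)
    (Fbar : ℝ → ℝ) (hFbar : ∀ x, Fbar x = (μ {ω | x < X ω}).toReal)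
    (hint : IntegrableOn (fun x => Fbar x ^ 2) (Set.Ioi 0) volume)
    (m : ℕ) (hm : 1 ≤ m) :
    (∏ i ∈ Finset.Icc 1 m, ∫ x in Set.Ioi (0 : ℝ), Fbar x ^ (2 * i)) ≤
      (∫ x in Set.Ioi (0 : ℝ), Fbar x ^ 2) ^ m ∧
    -(1 / 2) * ∏ i ∈ Finset.Icc 1 m, ∫ x in Set.Ioi (0 : ℝ), Fbar x ^ (2 * i) ≥
      -(1 / 2) * (∫ x in Set.Ioi (0 : ℝ), Fbar x ^ 2) ^ m := by
  have h01 : ∀ x, 0 ≤ Fbar x ∧ Fbar x ≤ 1 := by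
    intro x
    rw [hFbar x]
    constructor
    · exact ENNReal.toReal_nonneg
    · exact ENNReal.toReal_le_of_le_ofReal zero_le_one (by simpa using prob_le_one)
  have hanti : Antitone Fbar := by
    intro x y hxy
    rw [hFbar x, hFbar y]
    refine ENNReal.toReal_le_toReal (measure_ne_top _ _) (measure_ne_top _ _) |>.mpr ?_
    exact measure_mono fun ω hω => lt_of_le_of_lt hxy hω
  have hmeas : Measurable Fbar := hanti.measurable
  -- pointwise bound
  have hpt : ∀ i, 1 ≤ i → ∀ x : ℝ, Fbar x ^ (2 * i) ≤ Fbar x ^ 2 := by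
    intro i hi x
    exact pow_le_pow_of_le_one (h01 x).1 (h01 x).2 (by omega)
  -- integrability of each power
  have hintg : ∀ i, 1 ≤ i → IntegrableOn (fun x => Fbar x ^ (2 * i)) (Set.Ioi 0) volume := by
    intro i hi
    refine hint.mono' ((hmeas.pow_const _).aestronglyMeasurable.restrict) ?_
    filter_upwards with x
    rw [Real.norm_eq_abs, abs_of_nonneg (pow_nonneg (h01 x).1 _)]
    exact hpt i hi x
  have hBnonneg : 0 ≤ ∫ x in Set.Ioi (0 : ℝ), Fbar x ^ 2 :=
    setIntegral_nonneg measurableSet_Ioi fun x _ => sq_nonneg _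
  have hmain : (∏ i ∈ Finset.Icc 1 m, ∫ x in Set.Ioi (0 : ℝ), Fbar x ^ (2 * i)) ≤
      (∫ x in Set.Ioi (0 : ℝ), Fbar x ^ 2) ^ m := by
    calc (∏ i ∈ Finset.Icc 1 m, ∫ x in Set.Ioi (0 : ℝ), Fbar x ^ (2 * i))
        ≤ ∏ i ∈ Finset.Icc 1 m, ∫ x in Set.Ioi (0 : ℝ), Fbar x ^ 2 := by
          refine Finset.prod_le_prod ?_ ?_
          · intro i hi
            exact setIntegral_nonneg measurableSet_Ioi fun x _ => pow_nonneg (h01 x).1 _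
          · intro i hi
            have hi1 : 1 ≤ i := (Finset.mem_Icc.mp hi).1
            exact setIntegral_mono_on (hintg i hi1) hint measurableSet_Ioi
              fun x _ => hpt i hi1 x
      _ = (∫ x in Set.Ioi (0 : ℝ), Fbar x ^ 2) ^ m := by
          rw [Finset.prod_const, Nat.card_Icc]; norm_num
  exact ⟨hmain, by nlinarith [hmain]⟩
end

section
/- Let X and Y be nonnegative random variables with quantile functions Q_X(u) = inf{x : P(X ≤ x) ≥ u} and Q_Y(u) = inf{x : P(Y ≤ x) ≥ u}. Assume X is smaller than Y in the dispersive order, i.e. Q_X(v) - Q_X(u) ≤ Q_Y(v) - Q_Y(u) for all 0 < u < v < 1, that the essential infima of X and Y are both 0 (inf_{u∈(0,1)} Q_X(u) = inf_{u∈(0,1)} Q_Y(u) = 0), and that ∫₀^∞ P(Y > x)² dx < ∞. Then for every integer m ≥ 1, ∏_{i=1}^m ∫₀^∞ P(X > x)^{2i} dx ≤ ∏_{i=1}^m ∫₀^∞ P(Y > x)^{2i} dx; equivalently ξJ(X^{(m)}_MinRSSU) ≥ ξJ(Y^{(m)}_MinRSSU). -/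
open MeasureTheory Finset

open Filter Topology


/-- Right continuity of the CDF, in the form we need. -/
lemma cdf_right_lim {Ω : Type*} [MeasurableSpace Ω] (μ : Measure Ω) [IsProbabilityMeasure μ]
    (X : Ω → ℝ) (hX : Measurable X) (x u : ℝ)
    (h : ∀ y, x < y → u ≤ (μ {ω | X ω ≤ y}).toReal) :
    u ≤ (μ {ω | X ω ≤ x}).toReal := by
  set s : ℕ → Set Ω := fun n => {ω | X ω ≤ x + 1 / (n + 1)} with hs
  have hmeas : ∀ n, MeasurableSet (s n) := fun n => hX measurableSet_Iic
  have hanti : Antitone s := by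
    intro a b hab ω hω
    simp only [hs, Set.mem_setOf_eq] at hω ⊢
    refine le_trans hω ?_
    gcongr
  have hiInter : ⋂ n, s n = {ω | X ω ≤ x} := by
    ext ω
    simp only [Set.mem_iInter, hs, Set.mem_setOf_eq]
    constructor
    · intro hall
      by_contra hlt
      push_neg at hlt
      obtain ⟨n, hn⟩ := exists_nat_one_div_lt (sub_pos.mpr hlt)
      have := hall n
      push_cast at this hn ⊢
      linarith
    · intro hle n
      have : (0:ℝ) < 1 / (n + 1) := by positivity
      linarith
  have ht := tendsto_measure_iInter_atTop (fun n => (hmeas n).nullMeasurableSet) hanti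
    ⟨0, measure_ne_top μ _⟩
  rw [hiInter] at ht
  have ht2 : Tendsto (fun n => (μ (s n)).toReal) atTop (𝓝 ((μ {ω | X ω ≤ x}).toReal)) :=
    (ENNReal.tendsto_toReal (measure_ne_top μ _)).comp ht
  refine ge_of_tendsto' ht2 fun n => h _ ?_
  have : (0:ℝ) < 1 / (n + 1) := by positivity
  linarith

/-- The set `{x | u ≤ F x}` is nonempty when `u < 1`. -/
lemma cdf_nonempty {Ω : Type*} [MeasurableSpace Ω] (μ : Measure Ω) [IsProbabilityMeasure μ]
    (X : Ω → ℝ) (hX : Measurable X) (u : ℝ) (hu : u < 1) :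
    ∃ x : ℝ, u ≤ (μ {ω | X ω ≤ x}).toReal := by
  set s : ℕ → Set Ω := fun n => {ω | X ω ≤ (n : ℝ)} with hs
  have hmono : Monotone s := by
    intro a b hab ω hω
    simp only [hs, Set.mem_setOf_eq] at hω ⊢
    exact le_trans hω (by exact_mod_cast hab)
  have hiUnion : ⋃ n, s n = Set.univ := by
    ext ω
    simp only [Set.mem_iUnion, hs, Set.mem_setOf_eq, Set.mem_univ, iff_true]
    exact exists_nat_ge (X ω)
  have ht := tendsto_measure_iUnion_atTop (μ := μ) hmono
  rw [hiUnion, measure_univ] at ht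
  have ht2 : Tendsto (fun n : ℕ => (μ (s n)).toReal) atTop (𝓝 (1:ℝ)) := by
    have h := (ENNReal.tendsto_toReal (by norm_num : (1:ENNReal) ≠ ⊤)).comp ht
    rw [ENNReal.toReal_one] at h
    exact h
  obtain ⟨n, hn⟩ := (ht2.eventually (eventually_ge_nhds hu)).exists
  exact ⟨n, hn⟩

/-- If `X ≤_disp Y` (dispersive order of the quantile functions), both
essential infima equal `0`, and `∫₀^∞ P(Y > x)² dx < ∞`, then for every `m ≥ 1`,
`∏_{i=1}^m ∫₀^∞ P(X > x)^{2i} dx ≤ ∏_{i=1}^m ∫₀^∞ P(Y > x)^{2i} dx`, i.e.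
`ξJ(X^{(m)}_MinRSSU) ≥ ξJ(Y^{(m)}_MinRSSU)`. -/
theorem crex_minrssu_dispersive_order
    {Ω₁ Ω₂ : Type*} [MeasurableSpace Ω₁] [MeasurableSpace Ω₂]
    (μ : Measure Ω₁) (ν : Measure Ω₂)
    [IsProbabilityMeasure μ] [IsProbabilityMeasure ν]
    (X : Ω₁ → ℝ) (Y : Ω₂ → ℝ) (hX : Measurable X) (hY : Measurable Y)
    (hXpos : ∀ ω, 0 ≤ X ω) (hYpos : ∀ ω, 0 ≤ Y ω)
    (QX QY : ℝ → ℝ)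
    (hQX : ∀ u, QX u = sInf {x : ℝ | u ≤ (μ {ω | X ω ≤ x}).toReal})
    (hQY : ∀ u, QY u = sInf {x : ℝ | u ≤ (ν {ω | Y ω ≤ x}).toReal})
    (hdisp : ∀ u v : ℝ, 0 < u → u < v → v < 1 → QX v - QX u ≤ QY v - QY u)
    (hinfX : sInf (QX '' Set.Ioo 0 1) = 0)
    (hinfY : sInf (QY '' Set.Ioo 0 1) = 0)
    (hint : IntegrableOn (fun x => ((ν {ω | x < Y ω}).toReal) ^ 2) (Set.Ioi 0) volume)
    (m : ℕ) (hm : 1 ≤ m) :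
    (∏ i ∈ Finset.Icc 1 m, ∫ x in Set.Ioi (0 : ℝ), ((μ {ω | x < X ω}).toReal) ^ (2 * i)) ≤
      ∏ i ∈ Finset.Icc 1 m, ∫ x in Set.Ioi (0 : ℝ), ((ν {ω | x < Y ω}).toReal) ^ (2 * i) := by
  set FX : ℝ → ℝ := fun x => (μ {ω | X ω ≤ x}).toReal with hFX
  set FY : ℝ → ℝ := fun x => (ν {ω | Y ω ≤ x}).toReal with hFY
  set GX : ℝ → ℝ := fun x => (μ {ω | x < X ω}).toReal with hGX
  set GY : ℝ → ℝ := fun x => (ν {ω | x < Y ω}).toReal with hGY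
  -- basic facts about F and G
  have hFXmono : Monotone FX := by
    intro a b hab
    exact ENNReal.toReal_le_toReal (measure_ne_top _ _) (measure_ne_top _ _) |>.mpr
      (measure_mono fun ω hω => le_trans hω hab)
  have hFYmono : Monotone FY := by
    intro a b hab
    exact ENNReal.toReal_le_toReal (measure_ne_top _ _) (measure_ne_top _ _) |>.mpr
      (measure_mono fun ω hω => le_trans hω hab)
  have hFXle1 : ∀ x, FX x ≤ 1 := fun x => by
    have h : (μ {ω | X ω ≤ x}).toReal ≤ (1 : ENNReal).toReal :=
      ENNReal.toReal_mono (by norm_num) prob_le_one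
    simpa using h
  have hFYle1 : ∀ x, FY x ≤ 1 := fun x => by
    have h : (ν {ω | Y ω ≤ x}).toReal ≤ (1 : ENNReal).toReal :=
      ENNReal.toReal_mono (by norm_num) prob_le_one
    simpa using h
  have hFXnonneg : ∀ x, 0 ≤ FX x := fun x => ENNReal.toReal_nonneg
  have hFYnonneg : ∀ x, 0 ≤ FY x := fun x => ENNReal.toReal_nonneg
  have hGXeq : ∀ x, GX x = 1 - FX x := by
    intro x
    have hc : {ω | x < X ω} = {ω | X ω ≤ x}ᶜ := by
      ext ω; simp [not_le]
    have hms : MeasurableSet {ω | X ω ≤ x} := hX measurableSet_Iic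
    rw [hGX, hFX]
    simp only [hc]
    rw [prob_compl_eq_one_sub hms]
    rw [ENNReal.toReal_sub_of_le (prob_le_one) (by norm_num)]
    simp
  have hGYeq : ∀ x, GY x = 1 - FY x := by
    intro x
    have hc : {ω | x < Y ω} = {ω | Y ω ≤ x}ᶜ := by
      ext ω; simp [not_le]
    have hms : MeasurableSet {ω | Y ω ≤ x} := hY measurableSet_Iic
    rw [hGY, hFY]
    simp only [hc]
    rw [prob_compl_eq_one_sub hms]
    rw [ENNReal.toReal_sub_of_le (prob_le_one) (by norm_num)]
    simp
  -- quantile sets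
  have hFXneg : ∀ x : ℝ, x < 0 → FX x = 0 := by
    intro x hx
    have : {ω | X ω ≤ x} = ∅ := by
      ext ω; simp only [Set.mem_setOf_eq, Set.mem_empty_iff_false, iff_false, not_le]
      exact lt_of_lt_of_le hx (hXpos ω)
    simp [hFX, this]
  have hFYneg : ∀ x : ℝ, x < 0 → FY x = 0 := by
    intro x hx
    have : {ω | Y ω ≤ x} = ∅ := by
      ext ω; simp only [Set.mem_setOf_eq, Set.mem_empty_iff_false, iff_false, not_le]
      exact lt_of_lt_of_le hx (hYpos ω)
    simp [hFY, this]
  have hSXlb : ∀ u : ℝ, 0 < u → ∀ x ∈ {x : ℝ | u ≤ FX x}, (0:ℝ) ≤ x := by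
    intro u hu x hx
    by_contra hneg
    push_neg at hneg
    rw [Set.mem_setOf_eq, hFXneg x hneg] at hx
    linarith
  have hSYlb : ∀ u : ℝ, 0 < u → ∀ x ∈ {x : ℝ | u ≤ FY x}, (0:ℝ) ≤ x := by
    intro u hu x hx
    by_contra hneg
    push_neg at hneg
    rw [Set.mem_setOf_eq, hFYneg x hneg] at hx
    linarith
  have hSXbdd : ∀ u : ℝ, 0 < u → BddBelow {x : ℝ | u ≤ FX x} := fun u hu => ⟨0, hSXlb u hu⟩
  have hSYbdd : ∀ u : ℝ, 0 < u → BddBelow {x : ℝ | u ≤ FY x} := fun u hu => ⟨0, hSYlb u hu⟩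
  have hSXne : ∀ u : ℝ, u < 1 → Set.Nonempty {x : ℝ | u ≤ FX x} := fun u hu =>
    cdf_nonempty μ X hX u hu
  have hSYne : ∀ u : ℝ, u < 1 → Set.Nonempty {x : ℝ | u ≤ FY x} := fun u hu =>
    cdf_nonempty ν Y hY u hu
  have hQXnonneg : ∀ u : ℝ, 0 < u → u < 1 → 0 ≤ QX u := by
    intro u hu hu1
    rw [hQX]
    exact le_csInf (hSXne u hu1) (hSXlb u hu)
  have hQYnonneg : ∀ u : ℝ, 0 < u → u < 1 → 0 ≤ QY u := by
    intro u hu hu1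
    rw [hQY]
    exact le_csInf (hSYne u hu1) (hSYlb u hu)
  -- the quantile belongs to the set (right-continuity of the CDF)
  have hQXmem : ∀ u : ℝ, 0 < u → u < 1 → u ≤ FX (QX u) := by
    intro u hu hu1
    refine cdf_right_lim μ X hX (QX u) u fun y hy => ?_
    rw [hQX] at hy
    obtain ⟨z, hz, hzy⟩ := exists_lt_of_csInf_lt (hSXne u hu1) hy
    exact le_trans hz (hFXmono hzy.le)
  -- Galois connection direction
  have hGalX : ∀ u x : ℝ, 0 < u → u < 1 → QX u ≤ x → u ≤ FX x := by
    intro u x hu hu1 hle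
    exact le_trans (hQXmem u hu hu1) (hFXmono hle)
  -- QX is monotone on (0,1)
  have hQXmono : ∀ u v : ℝ, 0 < u → u ≤ v → v < 1 → QX u ≤ QX v := by
    intro u v hu huv hv1
    rw [hQX, hQX]
    exact csInf_le_csInf (hSXbdd u hu) (hSXne v hv1)
      (fun x hx => le_trans huv hx)
  -- QX ≤ QY on (0,1)
  have hQle : ∀ u : ℝ, 0 < u → u < 1 → QX u ≤ QY u := by
    intro u hu hu1
    have hlb : ∀ y ∈ QX '' Set.Ioo 0 1, QX u - QY u ≤ y := by
      rintro y ⟨w, hw, rfl⟩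
      have key : ∀ w' : ℝ, 0 < w' → w' < u → QX u - QY u ≤ QX w' := by
        intro w' hw' hw'u
        have h1 := hdisp w' u hw' hw'u hu1
        have h2 := hQYnonneg w' hw' (lt_trans hw'u hu1)
        linarith
      rcases lt_or_ge w u with hwu | huw
      · exact key w hw.1 hwu
      · have h1 : QX u - QY u ≤ QX (u / 2) := key (u / 2) (by linarith) (by linarith)
        have h2 : QX (u / 2) ≤ QX w := hQXmono (u / 2) w (by linarith) (by linarith) hw.2
        linarith
    have := le_csInf (Set.Nonempty.image QX (Set.nonempty_Ioo.mpr (by norm_num))) hlb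
    rw [hinfX] at this
    linarith
  -- FY ≤ FX pointwise
  have hF : ∀ x : ℝ, FY x ≤ FX x := by
    intro x
    by_contra hcon
    push_neg at hcon
    set u : ℝ := (FX x + FY x) / 2 with hu
    have hu0 : 0 < u := by
      have := hFXnonneg x
      rw [hu]; linarith
    have hu1 : u < 1 := by
      have := hFYle1 x
      rw [hu]; linarith
    have hQYx : QY u ≤ x := by
      rw [hQY]
      exact csInf_le (hSYbdd u hu0) (by rw [Set.mem_setOf_eq, hu]; linarith)
    have : u ≤ FX x := hGalX u x hu0 hu1 (le_trans (hQle u hu0 hu1) hQYx)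
    rw [hu] at this
    linarith
  -- GX ≤ GY pointwise
  have hG : ∀ x : ℝ, GX x ≤ GY x := by
    intro x
    rw [hGXeq, hGYeq]
    linarith [hF x]
  have hGXnonneg : ∀ x, 0 ≤ GX x := fun x => ENNReal.toReal_nonneg
  have hGYnonneg : ∀ x, 0 ≤ GY x := fun x => ENNReal.toReal_nonneg
  have hGXle1 : ∀ x, GX x ≤ 1 := fun x => by
    rw [hGXeq]; linarith [hFXnonneg x]
  have hGYle1 : ∀ x, GY x ≤ 1 := fun x => by
    rw [hGYeq]; linarith [hFYnonneg x]
  -- measurability of survival functions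
  have hGXanti : Antitone GX := by
    intro a b hab
    exact ENNReal.toReal_le_toReal (measure_ne_top _ _) (measure_ne_top _ _) |>.mpr
      (measure_mono fun ω hω => lt_of_le_of_lt hab hω)
  have hGYanti : Antitone GY := by
    intro a b hab
    exact ENNReal.toReal_le_toReal (measure_ne_top _ _) (measure_ne_top _ _) |>.mpr
      (measure_mono fun ω hω => lt_of_le_of_lt hab hω)
  have hGXmeas : Measurable GX := hGXanti.measurable
  have hGYmeas : Measurable GY := hGYanti.measurable
  -- integrability for each power
  have hintY : ∀ k : ℕ, 2 ≤ k → IntegrableOn (fun x => GY x ^ k) (Set.Ioi 0) volume := by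
    intro k hk
    refine Integrable.mono hint ((hGYmeas.pow_const k).aestronglyMeasurable.restrict) ?_
    refine Filter.Eventually.of_forall fun x => ?_
    have h2 : GY x ^ k ≤ GY x ^ 2 := pow_le_pow_of_le_one (hGYnonneg x) (hGYle1 x) hk
    simpa [Real.norm_eq_abs, abs_of_nonneg (hGYnonneg x),
      abs_of_nonneg (pow_nonneg (hGYnonneg x) 2)] using h2
  have hintX : ∀ k : ℕ, 2 ≤ k → IntegrableOn (fun x => GX x ^ k) (Set.Ioi 0) volume := by
    intro k hk
    refine Integrable.mono hint ((hGXmeas.pow_const k).aestronglyMeasurable.restrict) ?_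
    refine Filter.Eventually.of_forall fun x => ?_
    have h2 : GX x ^ k ≤ GY x ^ 2 :=
      le_trans (pow_le_pow_of_le_one (hGXnonneg x) (hGXle1 x) hk)
        (pow_le_pow_left₀ (hGXnonneg x) (hG x) 2)
    simpa [Real.norm_eq_abs, abs_of_nonneg (hGXnonneg x),
      abs_of_nonneg (pow_nonneg (hGYnonneg x) 2)] using h2
  -- compare the product term by term
  refine Finset.prod_le_prod (fun i hi => ?_) (fun i hi => ?_)
  · exact setIntegral_nonneg measurableSet_Ioi fun x _ => pow_nonneg (hGXnonneg x) _
  · have hik : 2 ≤ 2 * i := by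
      have : 1 ≤ i := (Finset.mem_Icc.mp hi).1
      omega
    exact setIntegral_mono_on (hintX (2 * i) hik) (hintY (2 * i) hik) measurableSet_Ioi
      fun x _ => pow_le_pow_left₀ (hGXnonneg x) (hG x) (2 * i)
end

section
/- Let X be a nonnegative random variable with ∫₀^∞ P(φ(X) > x)² dx < ∞, and let φ : [0,∞) → [0,∞) be a differentiable function with φ'(x) ≥ 1 for all x ≥ 0. Then φ(x) ≥ x for all x ≥ 0, hence P(X > t) ≤ P(φ(X) > t) for all t ≥ 0, and consequently for every integer m ≥ 1, ∏_{i=1}^m ∫₀^∞ P(X > x)^{2i} dx ≤ ∏_{i=1}^m ∫₀^∞ P(φ(X) > x)^{2i} dx; equivalently ξJ(X^{(m)}_MinRSSU) ≥ ξJ(φ(X)^{(m)}_MinRSSU). -/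
open MeasureTheory Finset

/-- For a nonnegative random variable `X` and a differentiable
`φ : [0,∞) → [0,∞)` with `φ' ≥ 1`, one has `φ(x) ≥ x` on `[0,∞)`, hence
`P(X > t) ≤ P(φ(X) > t)` for `t ≥ 0`, and consequently for every `m ≥ 1`,
`∏_{i=1}^m ∫₀^∞ P(X > x)^{2i} dx ≤ ∏_{i=1}^m ∫₀^∞ P(φ(X) > x)^{2i} dx`, i.e.
`ξJ(X^{(m)}_MinRSSU) ≥ ξJ(φ(X)^{(m)}_MinRSSU)`. -/
theorem crex_minrssu_transform
    {Ω : Type*} [MeasurableSpace Ω] (μ : Measure Ω) [IsProbabilityMeasure μ]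
    (X : Ω → ℝ) (hX : Measurable X) (hXpos : ∀ ω, 0 ≤ X ω)
    (φ : ℝ → ℝ) (hdiff : Differentiable ℝ φ)
    (hderiv : ∀ x, 0 ≤ x → 1 ≤ deriv φ x)
    (hmaps : ∀ x, 0 ≤ x → 0 ≤ φ x)
    (hint : IntegrableOn (fun x => ((μ {ω | x < φ (X ω)}).toReal) ^ 2)
      (Set.Ioi 0) volume) :
    (∀ x : ℝ, 0 ≤ x → x ≤ φ x) ∧
    (∀ t : ℝ, 0 ≤ t → μ {ω | t < X ω} ≤ μ {ω | t < φ (X ω)}) ∧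
    (∀ m : ℕ, 1 ≤ m →
      (∏ i ∈ Finset.Icc 1 m,
          ∫ x in Set.Ioi (0 : ℝ), ((μ {ω | x < X ω}).toReal) ^ (2 * i)) ≤
        ∏ i ∈ Finset.Icc 1 m,
          ∫ x in Set.Ioi (0 : ℝ), ((μ {ω | x < φ (X ω)}).toReal) ^ (2 * i)) := by
  -- Part 1: x ≤ φ x on [0, ∞)
  have h1 : ∀ x : ℝ, 0 ≤ x → x ≤ φ x := by
    intro x hx
    have hg : MonotoneOn (fun y => φ y - y) (Set.Ici (0 : ℝ)) := by
      apply monotoneOn_of_deriv_nonneg (convex_Ici 0)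
      · exact (hdiff.sub differentiable_id).continuous.continuousOn
      · exact (hdiff.sub differentiable_id).differentiableOn
      · intro y hy
        rw [interior_Ici] at hy
        have : deriv (fun y => φ y - y) y = deriv φ y - 1 :=
          ((hdiff y).hasDerivAt.sub (hasDerivAt_id y)).deriv
        rw [this]
        linarith [hderiv y (le_of_lt hy)]
    have := hg (Set.self_mem_Ici) (Set.mem_Ici.2 hx) hx
    have h0 := hmaps 0 le_rfl
    simp only at this
    linarith
  -- Part 2: survival function comparison
  have hle : ∀ ω, X ω ≤ φ (X ω) := fun ω => h1 (X ω) (hXpos ω)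
  have h2 : ∀ t : ℝ, 0 ≤ t → μ {ω | t < X ω} ≤ μ {ω | t < φ (X ω)} := by
    intro t _
    exact measure_mono fun ω hω => lt_of_lt_of_le hω (hle ω)
  refine ⟨h1, h2, ?_⟩
  -- Part 3
  intro m _
  set f : ℝ → ℝ := fun x => (μ {ω | x < X ω}).toReal with hf
  set g : ℝ → ℝ := fun x => (μ {ω | x < φ (X ω)}).toReal with hgdef
  have hfg : ∀ x, f x ≤ g x := by
    intro x
    exact ENNReal.toReal_mono (measure_ne_top μ _)
      (measure_mono fun ω hω => lt_of_lt_of_le hω (hle ω))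
  have hf0 : ∀ x, 0 ≤ f x := fun x => ENNReal.toReal_nonneg
  have hg0 : ∀ x, 0 ≤ g x := fun x => ENNReal.toReal_nonneg
  have hg1 : ∀ x, g x ≤ 1 := by
    intro x
    have := prob_le_one (μ := μ) (s := {ω | x < φ (X ω)})
    simpa using ENNReal.toReal_mono (by simp) this
  have hf1 : ∀ x, f x ≤ 1 := fun x => le_trans (hfg x) (hg1 x)
  have hfanti : Antitone f := by
    intro a b hab
    exact ENNReal.toReal_mono (measure_ne_top μ _)
      (measure_mono fun ω hω => lt_of_le_of_lt hab hω)
  have hganti : Antitone g := by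
    intro a b hab
    exact ENNReal.toReal_mono (measure_ne_top μ _)
      (measure_mono fun ω hω => lt_of_le_of_lt hab hω)
  have hfm : Measurable f := hfanti.measurable
  have hgm : Measurable g := hganti.measurable
  -- integrability of g^(2i) for i ≥ 1
  have hgint : ∀ i : ℕ, 1 ≤ i →
      IntegrableOn (fun x => g x ^ (2 * i)) (Set.Ioi 0) volume := by
    intro i hi
    refine Integrable.mono hint ((hgm.pow_const _).aestronglyMeasurable) ?_
    filter_upwards with x
    rw [Real.norm_eq_abs, Real.norm_eq_abs, abs_of_nonneg (pow_nonneg (hg0 x) _),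
      abs_of_nonneg (pow_nonneg (hg0 x) _)]
    exact pow_le_pow_of_le_one (hg0 x) (hg1 x) (by omega)
  have hfint : ∀ i : ℕ, 1 ≤ i →
      IntegrableOn (fun x => f x ^ (2 * i)) (Set.Ioi 0) volume := by
    intro i hi
    refine Integrable.mono (hgint i hi) ((hfm.pow_const _).aestronglyMeasurable) ?_
    filter_upwards with x
    rw [Real.norm_eq_abs, Real.norm_eq_abs, abs_of_nonneg (pow_nonneg (hf0 x) _),
      abs_of_nonneg (pow_nonneg (hg0 x) _)]
    exact pow_le_pow_left₀ (hf0 x) (hfg x) _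
  apply Finset.prod_le_prod
  · intro i _
    exact integral_nonneg fun x => pow_nonneg (hf0 x) _
  · intro i hi
    have hi1 : 1 ≤ i := (Finset.mem_Icc.1 hi).1
    exact setIntegral_mono_on (hfint i hi1) (hgint i hi1) measurableSet_Ioi
      (fun x _ => pow_le_pow_left₀ (hf0 x) (hfg x) _)
end

section
/- Let X be a nonnegative random variable with continuous cdf F whose support is contained in [0, 2μ], and suppose X is symmetric about μ, i.e. F(μ - t) = 1 - F(μ + t) for all t ∈ ℝ. Then for every integer i ≥ 1, ∫₀^{2μ} (1 - F(x))^{2i} dx = ∫₀^{2μ} F(x)^{2i} dx, and consequently ξJ(X^{(m)}_MinRSSU) = -(1/2)∏_{i=1}^m ∫₀^{2μ} (1-F(x))^{2i} dx equals the cumulative extropy analogue CJ(X^{(m)}_MinRSSU) = -(1/2)∏_{i=1}^m ∫₀^{2μ} F(x)^{2i} dx. -/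
open MeasureTheory Finset

/-- If `X` is a nonnegative random variable with continuous cdf `F`,
support contained in `[0, 2μ]`, and symmetric about `μ` (`F(μ-t) = 1 - F(μ+t)`), then
for every `i ≥ 1`, `∫₀^{2μ} (1-F(x))^{2i} dx = ∫₀^{2μ} F(x)^{2i} dx`, and consequently
`ξJ(X^{(m)}_MinRSSU) = CJ(X^{(m)}_MinRSSU)`. -/
theorem crex_eq_cex_of_symmetric
    {Ω : Type*} [MeasurableSpace Ω] (P : Measure Ω) [IsProbabilityMeasure P]
    (X : Ω → ℝ) (hX : Measurable X) (μ : ℝ) (hμ : 0 ≤ μ)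
    (hsupp : ∀ ω, X ω ∈ Set.Icc 0 (2 * μ))
    (F : ℝ → ℝ) (hF : ∀ x, F x = (P {ω | X ω ≤ x}).toReal)
    (hcont : Continuous F)
    (hsym : ∀ t : ℝ, F (μ - t) = 1 - F (μ + t)) :
    (∀ i : ℕ, 1 ≤ i →
      (∫ x in (0 : ℝ)..(2 * μ), (1 - F x) ^ (2 * i)) =
        ∫ x in (0 : ℝ)..(2 * μ), F x ^ (2 * i)) ∧
    (∀ m : ℕ, 1 ≤ m →
      -(1 / 2) * ∏ i ∈ Finset.Icc 1 m, ∫ x in (0 : ℝ)..(2 * μ), (1 - F x) ^ (2 * i) =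
        -(1 / 2) * ∏ i ∈ Finset.Icc 1 m, ∫ x in (0 : ℝ)..(2 * μ), F x ^ (2 * i)) := by
  have key : ∀ x : ℝ, 1 - F (2 * μ - x) = F x := by
    intro x
    have h := hsym (μ - x)
    have h1 : μ - (μ - x) = x := by ring
    have h2 : μ + (μ - x) = 2 * μ - x := by ring
    rw [h1, h2] at h
    linarith
  have part1 : ∀ i : ℕ, 1 ≤ i →
      (∫ x in (0 : ℝ)..(2 * μ), (1 - F x) ^ (2 * i)) =
        ∫ x in (0 : ℝ)..(2 * μ), F x ^ (2 * i) := by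
    intro i hi
    have hrefl := intervalIntegral.integral_comp_sub_left
      (a := (0:ℝ)) (b := 2 * μ) (fun x => (1 - F x) ^ (2 * i)) (2 * μ)
    simp only [sub_zero, sub_self] at hrefl
    rw [← hrefl]
    congr 1
    ext x
    rw [key x]
  refine ⟨part1, fun m hm => ?_⟩
  congr 1
  exact Finset.prod_congr rfl fun i hi => part1 i (Finset.mem_Icc.mp hi).1
end
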